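/- Let Q be a rack and A a subset of Q. Then the subgroup of the symmetric group on Q generated by the right translations R_a with a in A equals the subgroup generated by the right translations R_x with x in the subrack ⟨A⟩ generated by A. -/
import Mathlib


/-- A (right) rack: a set with a binary operation `mul` such that every right
translation `R_x : y ↦ y * x` is a bijection (with inverse given by the right
division `div`), satisfying right self-distributivity. -/
class RightRack (Q : Type*) where
  mul : Q → Q → Q
  div : Q → Q → Q
  div_mul : ∀ x y : Q, mul (div x y) y = x
  mul_div : ∀ x y : Q, div (mul x y) y = x
  self_distrib : ∀ x y z : Q, mul (mul x y) z = mul (mul x z) (mul y z)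

namespace RightRack

/-- The right translation `R_x` as a permutation of `Q`. -/
def rt {Q : Type*} [RightRack Q] (x : Q) : Equiv.Perm Q where
  toFun y := mul y x
  invFun y := div y x
  left_inv y := mul_div y x
  right_inv y := div_mul y x

/-- The right multiplication group `Rmlt(Q)`: the subgroup of the symmetric group
on `Q` generated by all right translations. -/
def rmlt (Q : Type*) [RightRack Q] : Subgroup (Equiv.Perm Q) :=
  Subgroup.closure (Set.range (rt : Q → Equiv.Perm Q))

end RightRack

/-- A quandle: an idempotent rack. -/
class RightQuandle (Q : Type*) extends RightRack Q where
  idem : ∀ x : Q, mul x x = x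

/-- The subrack `⟨A⟩` generated by a subset `A` of a rack: the smallest subset of
`Q` containing `A` and closed under both `*` and `/`. -/
def subrackClosure {Q : Type*} [RightRack Q] (A : Set Q) : Set Q :=
  ⋂₀ {S : Set Q | A ⊆ S ∧ (∀ x ∈ S, ∀ y ∈ S, RightRack.mul x y ∈ S) ∧
      (∀ x ∈ S, ∀ y ∈ S, RightRack.div x y ∈ S)}

open RightRack in
lemma aux_rt_mul {Q : Type*} [RightRack Q] (x y : Q) :
    rt (mul x y) = rt y * rt x * (rt y)⁻¹ := by
  ext z
  simp only [rt, Equiv.Perm.mul_apply, Equiv.coe_fn_mk, Equiv.Perm.inv_def, Equiv.coe_fn_symm_mk]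
  rw [self_distrib, RightRack.div_mul]

open RightRack in
lemma aux_rt_div {Q : Type*} [RightRack Q] (x y : Q) :
    rt (div x y) = (rt y)⁻¹ * rt x * rt y := by
  have h := aux_rt_mul (div x y) y
  rw [RightRack.div_mul] at h
  rw [h]; group

/-- Let `Q` be a rack and `A ⊆ Q`. The subgroup of the symmetric group on `Q`
generated by the right translations `R_a` with `a ∈ A` equals the subgroup
generated by the right translations `R_x` with `x` in the subrack `⟨A⟩`
generated by `A`. -/
theorem closure_rt_image_eq_closure_rt_subrack {Q : Type*} [RightRack Q] (A : Set Q) :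
    Subgroup.closure ((RightRack.rt : Q → Equiv.Perm Q) '' A)
      = Subgroup.closure ((RightRack.rt : Q → Equiv.Perm Q) '' subrackClosure A) := by
  apply le_antisymm
  · apply Subgroup.closure_mono
    apply Set.image_mono
    intro a ha S hS
    exact hS.1 ha
  · rw [Subgroup.closure_le]
    rintro _ ⟨x, hx, rfl⟩
    set G := Subgroup.closure ((RightRack.rt : Q → Equiv.Perm Q) '' A)
    have key : subrackClosure A ⊆ {x | RightRack.rt x ∈ G} := by
      apply Set.sInter_subset_of_mem
      refine ⟨fun a ha => Subgroup.subset_closure ⟨a, ha, rfl⟩, ?_, ?_⟩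
      · intro x hx y hy
        simp only [Set.mem_setOf_eq] at *
        rw [aux_rt_mul]
        exact mul_mem (mul_mem hy hx) (inv_mem hy)
      · intro x hx y hy
        simp only [Set.mem_setOf_eq] at *
        rw [aux_rt_div]
        exact mul_mem (mul_mem (inv_mem hy) hx) hy
    exact key hx
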